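/- There exists N₀ > 0 such that for every N ≥ N₀ there is a constant c_N > 0 with ∑_{η ∈ Δ} ω(η,η')^{−N} ≤ c_N for all η' ∈ Δ. -/

import Mathlib

open scoped Real ENNReal

noncomputable section

/-- The discrete curvelet index set `Δ`: scale `j ∈ ℕ`, position `k ∈ ℤ²`, and
orientation `ℓ ∈ {0, …, 2^{⌊j/2⌋} - 1}`. -/
structure CurveletIndex where
  j : ℕ
  k : ℤ × ℤ
  ℓ : ℕ
  hℓ : ℓ < 2 ^ (j / 2)

namespace CurveletIndex

/-- The orientation `θ_η = π ℓ / 2^{⌊j/2⌋}`. -/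
def theta (η : CurveletIndex) : ℝ := π * η.ℓ / 2 ^ (η.j / 2)

/-- The position `b_η = R_{θ_η} D_{2^{-j}} k`, with `D_a = diag(a, √a)`. -/
def bpos (η : CurveletIndex) : ℝ × ℝ :=
  (Real.cos η.theta * ((2 : ℝ) ^ (-(η.j : ℤ)) * η.k.1) -
      Real.sin η.theta * (Real.sqrt ((2 : ℝ) ^ (-(η.j : ℤ))) * η.k.2),
   Real.sin η.theta * ((2 : ℝ) ^ (-(η.j : ℤ)) * η.k.1) +
      Real.cos η.theta * (Real.sqrt ((2 : ℝ) ^ (-(η.j : ℤ))) * η.k.2))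

end CurveletIndex

/-- Euclidean norm on `ℝ × ℝ`. -/
def e2norm (v : ℝ × ℝ) : ℝ := Real.sqrt (v.1 ^ 2 + v.2 ^ 2)

/-- Geodesic distance of `s` and `t` in `ℝ/πℤ`: the absolute value of the
representative of `s - t` modulo `π` lying in `(-π/2, π/2]`. -/
def angDistPi (s t : ℝ) : ℝ :=
  |(s - t) - π * ((⌈((s - t) - π / 2) / π⌉ : ℤ) : ℝ)|

/-- The Hart Smith distance `d_HS(η, η')`. -/
def dHS (η η' : CurveletIndex) : ℝ :=
  angDistPi η.theta η'.theta ^ 2 + e2norm (η.bpos - η'.bpos) ^ 2 +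
    |Real.cos η.theta * (η.bpos - η'.bpos).1 + Real.sin η.theta * (η.bpos - η'.bpos).2|

/-- The dyadic-parabolic pseudo-distance `ω(η, η')` of Candès–Demanet. -/
def omegaDist (η η' : CurveletIndex) : ℝ :=
  2 ^ (((η.j : ℤ) - (η'.j : ℤ)).natAbs) *
    (1 + min ((2 : ℝ) ^ η.j) ((2 : ℝ) ^ η'.j) * dHS η η')



namespace OmegaAux

def encZ (z : ℤ) : ℕ × Bool := (z.natAbs, decide (0 ≤ z))

lemma encZ_inj : Function.Injective encZ := by
  intro a b h
  simp only [encZ, Prod.mk.injEq, decide_eq_decide] at h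
  omega

lemma ceil_dist (w : ℝ) (k : ℤ) : ((k - ⌈w⌉).natAbs : ℝ) - 1 ≤ |(k:ℝ) - w| := by
  have h1 := Int.le_ceil w
  have h2 := Int.ceil_lt_add_one w
  have habs : ((k - ⌈w⌉).natAbs : ℝ) = |((k:ℝ)) - (⌈w⌉:ℝ)| := by
    rw [Nat.cast_natAbs]; push_cast; ring_nf
  rw [habs]
  have h3 := abs_sub_abs_le_abs_sub ((k:ℝ) - (⌈w⌉:ℝ)) (w - (⌈w⌉:ℝ))
  have h4 : |w - (⌈w⌉:ℝ)| ≤ 1 := abs_le.2 ⟨by linarith, by linarith⟩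
  have h5 : ((k:ℝ) - (⌈w⌉:ℝ)) - (w - (⌈w⌉:ℝ)) = (k:ℝ) - w := by ring
  rw [h5] at h3
  linarith

lemma sub_one_cast_le {n : ℕ} {t : ℝ} (ht : 0 ≤ t) (h : (n:ℝ) - 1 ≤ t) :
    ((n-1:ℕ):ℝ) ≤ t := by
  rcases Nat.eq_zero_or_pos n with h0|h0
  · simp [h0, ht]
  · rw [Nat.cast_sub h0]; simpa using h

lemma cast_le_sq (n : ℕ) : (n:ℝ) ≤ (n:ℝ)^2 := by
  have : n ≤ n^2 := Nat.le_self_pow two_ne_zero n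
  exact_mod_cast this

def xq (η' η : CurveletIndex) : ℝ :=
  Real.cos η.theta * η'.bpos.1 + Real.sin η.theta * η'.bpos.2

def yq (η' η : CurveletIndex) : ℝ :=
  -Real.sin η.theta * η'.bpos.1 + Real.cos η.theta * η'.bpos.2

def Jn (η' η : CurveletIndex) : ℕ := ((η.j : ℤ) - (η'.j : ℤ)).natAbs

def n1 (η' η : CurveletIndex) : ℕ := (η.k.1 - ⌈(2:ℝ) ^ η.j * xq η' η⌉).natAbs

def n2 (η' η : CurveletIndex) : ℕ :=
  (η.k.2 - ⌈yq η' η / Real.sqrt ((2:ℝ) ^ (-(η.j:ℤ)))⌉).natAbs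

def zz (η' η : CurveletIndex) : ℤ :=
  (η.ℓ : ℤ) - ⌈((η.theta - η'.theta) - π/2)/π⌉ * 2 ^ (η.j / 2)

def qn (η' η : CurveletIndex) : ℕ :=
  (zz η' η - ⌈(2:ℝ) ^ (η.j/2) * η'.theta / π⌉).natAbs

set_option maxHeartbeats 2000000 in
lemma key_real (η' η : CurveletIndex) {N : ℝ} (hN : 12 ≤ N) :
    omegaDist η η' ^ (-N) ≤
      (((2:ℝ) ^ Jn η' η)⁻¹)^6
        * ((1 + ((qn η' η - 1 : ℕ):ℝ)/2^(Jn η' η))^4)⁻¹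
        * ((1 + ((n1 η' η - 1 : ℕ):ℝ)/2^(Jn η' η))^4)⁻¹
        * ((1 + ((n2 η' η - 1 : ℕ):ℝ)/2^(Jn η' η))^4)⁻¹ := by
  have h2j : (0:ℝ) < 2 ^ η.j := by positivity
  set J := Jn η' η with hJdef
  set m := min ((2:ℝ)^η.j) ((2:ℝ)^η'.j) with hm
  set p := ((2:ℝ)^η.j)⁻¹ with hp
  have h2J1 : (1:ℝ) ≤ 2 ^ J := one_le_pow₀ one_le_two
  have hm0 : 0 < m := lt_min (by positivity) (by positivity)
  have hzp : (2:ℝ)^(-(η.j:ℤ)) = p := by rw [zpow_neg, zpow_natCast]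
  have hpmul : p * (2:ℝ)^η.j = 1 := inv_mul_cancel₀ (ne_of_gt h2j)
  have hr : ((2:ℝ)^J)⁻¹ ≤ m * p := by
    rcases le_total η.j η'.j with h|h
    · have hmin : m = (2:ℝ)^η.j := min_eq_left (pow_le_pow_right₀ one_le_two h)
      rw [hmin, hp, mul_inv_cancel₀ (ne_of_gt h2j)]
      exact inv_le_one_of_one_le₀ h2J1
    · have hJe : J = η.j - η'.j := by rw [hJdef]; unfold Jn; omega
      have hmin : m = (2:ℝ)^η'.j := min_eq_right (pow_le_pow_right₀ one_le_two h)
      have hsplit : (2:ℝ)^η.j = 2^(η.j - η'.j) * 2^η'.j := by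
        rw [← pow_add]; congr 1; omega
      rw [hmin, hJe, hp, hsplit]
      apply le_of_eq
      field_simp
  set θ := η.theta with hθ
  set w := η.bpos - η'.bpos with hw
  have hw1 : w.1 = η.bpos.1 - η'.bpos.1 := rfl
  have hw2 : w.2 = η.bpos.2 - η'.bpos.2 := rfl
  have pyth := Real.sin_sq_add_cos_sq θ
  set s := Real.sqrt ((2:ℝ) ^ (-(η.j:ℤ))) with hs
  have hb1 : η.bpos.1 = Real.cos θ * (p * η.k.1) - Real.sin θ * (s * η.k.2) := by
    simp only [CurveletIndex.bpos, hzp, ← hθ]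
    rw [hs, hzp]
  have hb2 : η.bpos.2 = Real.sin θ * (p * η.k.1) + Real.cos θ * (s * η.k.2) := by
    simp only [CurveletIndex.bpos, hzp, ← hθ]
    rw [hs, hzp]
  have hu : Real.cos θ * w.1 + Real.sin θ * w.2 = p * ((η.k.1 : ℝ) - 2^η.j * xq η' η) := by
    rw [hw1, hw2, hb1, hb2]
    simp only [xq, ← hθ]
    linear_combination (p * (η.k.1:ℝ)) * pyth
      + (Real.cos θ * η'.bpos.1 + Real.sin θ * η'.bpos.2) * hpmul
  have hp0 : 0 < p := by positivity
  have hC : ((2:ℝ)^J)⁻¹ * ((n1 η' η - 1 : ℕ):ℝ)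
      ≤ m * |Real.cos θ * w.1 + Real.sin θ * w.2| := by
    rw [hu, abs_mul, abs_of_pos hp0]
    have ht : ((n1 η' η - 1 : ℕ):ℝ) ≤ |(η.k.1:ℝ) - 2^η.j * xq η' η| := by
      apply sub_one_cast_le (abs_nonneg _)
      exact ceil_dist ((2:ℝ)^η.j * xq η' η) η.k.1
    calc ((2:ℝ)^J)⁻¹ * ((n1 η' η - 1 : ℕ):ℝ)
        ≤ (m * p) * |(η.k.1:ℝ) - 2^η.j * xq η' η| :=
          mul_le_mul hr ht (Nat.cast_nonneg _) (by positivity)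
      _ = m * (p * |(η.k.1:ℝ) - 2^η.j * xq η' η|) := by ring
  -- coordinate k2
  have hsp : 0 < s := Real.sqrt_pos.2 (by rw [hzp]; positivity)
  have hs2 : s^2 = p := by rw [hs, Real.sq_sqrt (by positivity), hzp]
  have hv : -Real.sin θ * w.1 + Real.cos θ * w.2 = s * (η.k.2:ℝ) - yq η' η := by
    rw [hw1, hw2, hb1, hb2]
    simp only [yq, ← hθ]
    linear_combination (s * (η.k.2:ℝ)) * pyth
  have hvsq : (s * (η.k.2:ℝ) - yq η' η)^2 ≤ e2norm w ^ 2 := by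
    rw [← hv]
    have he : e2norm w ^ 2 = w.1^2 + w.2^2 := by
      unfold e2norm
      rw [Real.sq_sqrt (by positivity)]
    rw [he]
    nlinarith [sq_nonneg (Real.cos θ * w.1 + Real.sin θ * w.2), pyth]
  have hB : ((2:ℝ)^J)⁻¹ * ((n2 η' η - 1 : ℕ):ℝ) ≤ m * e2norm w ^ 2 := by
    have h1 : ((n2 η' η - 1:ℕ):ℝ) ≤ |(η.k.2:ℝ) - yq η' η / s| := by
      apply sub_one_cast_le (abs_nonneg _)
      exact ceil_dist (yq η' η / s) η.k.2
    have h2 : ((n2 η' η - 1:ℕ):ℝ)^2 ≤ ((η.k.2:ℝ) - yq η' η / s)^2 := by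
      rw [← sq_abs ((η.k.2:ℝ) - yq η' η / s)]
      exact pow_le_pow_left₀ (Nat.cast_nonneg _) h1 2
    have h3 : s * (η.k.2:ℝ) - yq η' η = s * ((η.k.2:ℝ) - yq η' η / s) := by
      field_simp
    calc ((2:ℝ)^J)⁻¹ * ((n2 η' η - 1:ℕ):ℝ)
        ≤ ((2:ℝ)^J)⁻¹ * ((n2 η' η - 1:ℕ):ℝ)^2 :=
          mul_le_mul_of_nonneg_left (cast_le_sq _) (by positivity)
      _ ≤ (m * p) * ((η.k.2:ℝ) - yq η' η / s)^2 :=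
          mul_le_mul hr h2 (by positivity) (by positivity)
      _ = m * (s * ((η.k.2:ℝ) - yq η' η / s))^2 := by
          rw [mul_pow, hs2]; ring
      _ = m * (s * (η.k.2:ℝ) - yq η' η)^2 := by rw [← h3]
      _ ≤ m * e2norm w ^ 2 := mul_le_mul_of_nonneg_left hvsq hm0.le
  -- coordinate ell
  set L := (2:ℝ)^(η.j/2) with hL
  have hL0 : 0 < L := by positivity
  have hpi := Real.pi_gt_three
  have hpi0 := Real.pi_pos
  have hth : θ = π * (η.ℓ:ℝ) / L := by rw [hθ]; rfl
  have hang : angDistPi θ η'.theta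
      = (π/L) * |(zz η' η : ℝ) - L * η'.theta / π| := by
    unfold angDistPi zz
    simp only [← hθ]
    set c0 : ℤ := ⌈((θ - η'.theta) - π/2)/π⌉ with hc0
    rw [← abs_of_pos (show (0:ℝ) < π/L by positivity), ← abs_mul]
    congr 1
    push_cast
    rw [hth, ← hL]
    field_simp
    ring
  have hA : ((2:ℝ)^J)⁻¹ * ((qn η' η - 1:ℕ):ℝ) ≤ m * angDistPi θ η'.theta ^ 2 := by
    have h1 : ((qn η' η - 1:ℕ):ℝ) ≤ |(zz η' η:ℝ) - L * η'.theta / π| := by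
      apply sub_one_cast_le (abs_nonneg _)
      exact ceil_dist (L * η'.theta / π) (zz η' η)
    have h2 : (π/L) * ((qn η' η - 1:ℕ):ℝ) ≤ angDistPi θ η'.theta := by
      rw [hang]
      exact mul_le_mul_of_nonneg_left h1 (by positivity)
    have h3 : ((π/L) * ((qn η' η - 1:ℕ):ℝ))^2 ≤ angDistPi θ η'.theta ^ 2 := by
      apply pow_le_pow_left₀ (by positivity) h2
    have hL2 : L^2 ≤ (2:ℝ)^η.j := by
      rw [hL, ← pow_mul]
      apply pow_le_pow_right₀ one_le_two (by omega)
    have h4 : p ≤ (π/L)^2 := by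
      have hp' : p ≤ (L^2)⁻¹ := by
        rw [hp]
        exact inv_anti₀ (by positivity) hL2
      have h5 : (L^2)⁻¹ ≤ (π/L)^2 := by
        rw [div_pow, inv_eq_one_div]
        gcongr
        nlinarith
      linarith
    calc ((2:ℝ)^J)⁻¹ * ((qn η' η - 1:ℕ):ℝ)
        ≤ ((2:ℝ)^J)⁻¹ * ((qn η' η - 1:ℕ):ℝ)^2 :=
          mul_le_mul_of_nonneg_left (cast_le_sq _) (by positivity)
      _ ≤ (m * p) * ((qn η' η - 1:ℕ):ℝ)^2 :=
          mul_le_mul hr (le_refl _) (by positivity) (by positivity)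
      _ ≤ (m * (π/L)^2) * ((qn η' η - 1:ℕ):ℝ)^2 := by
          apply mul_le_mul_of_nonneg_right _ (by positivity)
          exact mul_le_mul_of_nonneg_left h4 hm0.le
      _ = m * (((π/L) * ((qn η' η - 1:ℕ):ℝ))^2) := by ring
      _ ≤ m * angDistPi θ η'.theta ^ 2 := mul_le_mul_of_nonneg_left h3 hm0.le
  -- assembly
  set d := dHS η η' with hd
  have hd_eq : d = angDistPi θ η'.theta ^ 2 + e2norm w ^ 2
      + |Real.cos θ * w.1 + Real.sin θ * w.2| := rfl
  have htA : 0 ≤ angDistPi θ η'.theta ^ 2 := sq_nonneg _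
  have htB : 0 ≤ e2norm w ^ 2 := sq_nonneg _
  have htC : 0 ≤ |Real.cos θ * w.1 + Real.sin θ * w.2| := abs_nonneg _
  have hd0 : 0 ≤ d := by rw [hd_eq]; positivity
  set wA := 1 + ((qn η' η - 1:ℕ):ℝ)/2^J with hwA_def
  set wB := 1 + ((n2 η' η - 1:ℕ):ℝ)/2^J with hwB_def
  set wC := 1 + ((n1 η' η - 1:ℕ):ℝ)/2^J with hwC_def
  have hdiv : ∀ c : ℝ, c / 2^J = ((2:ℝ)^J)⁻¹ * c := fun c => by ring
  have hwA : wA ≤ 1 + m * d := by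
    rw [hwA_def, hdiv]
    have : m * angDistPi θ η'.theta ^ 2 ≤ m * d := by
      apply mul_le_mul_of_nonneg_left _ hm0.le
      rw [hd_eq]; linarith
    linarith [hA]
  have hwB : wB ≤ 1 + m * d := by
    rw [hwB_def, hdiv]
    have : m * e2norm w ^ 2 ≤ m * d := by
      apply mul_le_mul_of_nonneg_left _ hm0.le
      rw [hd_eq]; linarith
    linarith [hB]
  have hwC : wC ≤ 1 + m * d := by
    rw [hwC_def, hdiv]
    have : m * |Real.cos θ * w.1 + Real.sin θ * w.2| ≤ m * d := by
      apply mul_le_mul_of_nonneg_left _ hm0.le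
      rw [hd_eq]; linarith
    linarith [hC]
  have hwA1 : (1:ℝ) ≤ wA := by rw [hwA_def]; exact le_add_of_nonneg_right (by positivity)
  have hwB1 : (1:ℝ) ≤ wB := by rw [hwB_def]; exact le_add_of_nonneg_right (by positivity)
  have hwC1 : (1:ℝ) ≤ wC := by rw [hwC_def]; exact le_add_of_nonneg_right (by positivity)
  have hom : omegaDist η η' = 2^J * (1 + m * d) := rfl
  have hmd0 : 0 ≤ m * d := mul_nonneg hm0.le hd0
  have hmd1 : (1:ℝ) ≤ 1 + m * d := by linarith
  have hom1 : 1 ≤ omegaDist η η' := by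
    rw [hom]
    calc (1:ℝ) = 1 * 1 := by ring
      _ ≤ 2^J * (1 + m * d) := mul_le_mul h2J1 hmd1 zero_le_one (by positivity)
  have hstep1 : omegaDist η η' ^ (-N) ≤ omegaDist η η' ^ (-(12:ℝ)) :=
    Real.rpow_le_rpow_of_exponent_le hom1 (by linarith)
  have hstep2 : omegaDist η η' ^ (-(12:ℝ)) = ((omegaDist η η')^(12:ℕ))⁻¹ := by
    rw [← Real.rpow_natCast (omegaDist η η') 12, ← Real.rpow_neg (by linarith)]
    norm_num
  have hprod : ((2:ℝ)^J)^6 * (wA^4 * (wC^4 * wB^4)) ≤ (omegaDist η η')^(12:ℕ) := by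
    rw [hom, mul_pow]
    have e0 : ((2:ℝ)^J)^6 ≤ ((2:ℝ)^J)^12 := pow_le_pow_right₀ h2J1 (by norm_num)
    have eA : wA^4 ≤ (1+m*d)^4 := pow_le_pow_left₀ (by linarith) hwA 4
    have eB : wB^4 ≤ (1+m*d)^4 := pow_le_pow_left₀ (by linarith) hwB 4
    have eC : wC^4 ≤ (1+m*d)^4 := pow_le_pow_left₀ (by linarith) hwC 4
    calc ((2:ℝ)^J)^6 * (wA^4 * (wC^4 * wB^4))
        ≤ ((2:ℝ)^J)^12 * ((1+m*d)^4 * ((1+m*d)^4 * (1+m*d)^4)) := by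
          apply mul_le_mul e0 _ (by positivity) (by positivity)
          apply mul_le_mul eA _ (by positivity) (by positivity)
          exact mul_le_mul eC eB (by positivity) (by positivity)
      _ = ((2:ℝ)^J)^12 * (1+m*d)^12 := by ring
  have hpos : (0:ℝ) < ((2:ℝ)^J)^6 * (wA^4 * (wC^4 * wB^4)) := by positivity
  calc omegaDist η η' ^ (-N) ≤ ((omegaDist η η')^(12:ℕ))⁻¹ := by
        rw [← hstep2]; exact hstep1
    _ ≤ (((2:ℝ)^J)^6 * (wA^4 * (wC^4 * wB^4)))⁻¹ := inv_anti₀ hpos hprod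
    _ = (((2:ℝ)^J)⁻¹)^6 * ((wA^4)⁻¹ * ((wC^4)⁻¹ * (wB^4)⁻¹)) := by
        rw [mul_inv, mul_inv, mul_inv, inv_pow]
    _ = (((2:ℝ)^J)⁻¹)^6 * (wA^4)⁻¹ * (wC^4)⁻¹ * (wB^4)⁻¹ := by ring

lemma cancel_mod {L la lb ca cb : ℤ} (hL : 0 < L) (h : la - ca*L = lb - cb*L)
    (h1 : 0 ≤ la) (h2 : la < L) (h3 : 0 ≤ lb) (h4 : lb < L) : la = lb := by
  have h5 : la - lb = (ca - cb) * L := by ring_nf; linarith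
  rcases lt_trichotomy (ca - cb) 0 with hc|hc|hc
  · have h6 : ca - cb ≤ -1 := by omega
    nlinarith [mul_le_mul_of_nonneg_right h6 hL.le]
  · rw [hc, zero_mul] at h5; omega
  · have h6 : 1 ≤ ca - cb := by omega
    nlinarith [mul_le_mul_of_nonneg_right h6 hL.le]

def E (η' η : CurveletIndex) : (ℕ × Bool) × (ℕ × Bool) × (ℕ × Bool) × (ℕ × Bool) :=
  (encZ ((η.j : ℤ) - (η'.j : ℤ)),
   encZ (zz η' η - ⌈(2:ℝ) ^ (η.j/2) * η'.theta / π⌉),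
   encZ (η.k.1 - ⌈(2:ℝ) ^ η.j * xq η' η⌉),
   encZ (η.k.2 - ⌈yq η' η / Real.sqrt ((2:ℝ) ^ (-(η.j:ℤ)))⌉))

lemma E_inj (η' : CurveletIndex) : Function.Injective (E η') := by
  intro a b h
  obtain ⟨ja, ka, la, hla⟩ := a
  obtain ⟨jb, kb, lb, hlb⟩ := b
  simp only [E, Prod.mk.injEq] at h
  obtain ⟨h1, h2, h3, h4⟩ := h
  have hj : ja = jb := by have := encZ_inj h1; omega
  subst hj
  have hz := encZ_inj h2
  have hzz : zz η' ⟨ja, ka, la, hla⟩ = zz η' ⟨ja, kb, lb, hlb⟩ := by omega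
  have hl : la = lb := by
    simp only [zz] at hzz
    have hLpos : (0:ℤ) < 2 ^ (ja/2) := by positivity
    have hcast : ((2:ℤ)^(ja/2)) = ((2^(ja/2) : ℕ) : ℤ) := by push_cast; ring
    have := cancel_mod hLpos hzz (Int.ofNat_nonneg la)
      (by rw [hcast]; exact_mod_cast hla) (Int.ofNat_nonneg lb)
      (by rw [hcast]; exact_mod_cast hlb)
    exact_mod_cast this
  subst hl
  have hxq : xq η' ⟨ja, ka, la, hla⟩ = xq η' ⟨ja, kb, la, hlb⟩ := rfl
  have hyq : yq η' ⟨ja, ka, la, hla⟩ = yq η' ⟨ja, kb, la, hlb⟩ := rfl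
  rw [hxq] at h3
  rw [hyq] at h4
  have hk1 : ka.1 = kb.1 := by have := encZ_inj h3; omega
  have hk2 : ka.2 = kb.2 := by have := encZ_inj h4; omega
  simp only [CurveletIndex.mk.injEq]
  exact ⟨trivial, Prod.ext hk1 hk2, trivial⟩

def Fe (J n : ℕ) : ℝ≥0∞ := ENNReal.ofReal (((1 + ((n-1:ℕ):ℝ)/2^J)^4)⁻¹)

def c0e (J : ℕ) : ℝ≥0∞ := ENNReal.ofReal ((((2:ℝ)^J)⁻¹)^6)

def G (pp : (ℕ × Bool) × (ℕ × Bool) × (ℕ × Bool) × (ℕ × Bool)) : ℝ≥0∞ :=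
  c0e pp.1.1 * (Fe pp.1.1 pp.2.1.1 * (Fe pp.1.1 pp.2.2.1.1 * Fe pp.1.1 pp.2.2.2.1))

lemma key_en (η' η : CurveletIndex) {N : ℝ} (hN : 12 ≤ N) :
    ENNReal.ofReal (omegaDist η η' ^ (-N)) ≤ G (E η' η) := by
  have h := key_real η' η hN
  have hEq : G (E η' η) = ENNReal.ofReal ((((2:ℝ)^Jn η' η)⁻¹)^6)
      * (ENNReal.ofReal (((1 + ((qn η' η - 1:ℕ):ℝ)/2^(Jn η' η))^4)⁻¹)
      * (ENNReal.ofReal (((1 + ((n1 η' η - 1:ℕ):ℝ)/2^(Jn η' η))^4)⁻¹)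
      * ENNReal.ofReal (((1 + ((n2 η' η - 1:ℕ):ℝ)/2^(Jn η' η))^4)⁻¹))) := rfl
  calc ENNReal.ofReal (omegaDist η η' ^ (-N))
      ≤ ENNReal.ofReal ((((2:ℝ)^Jn η' η)⁻¹)^6
        * ((1 + ((qn η' η - 1:ℕ):ℝ)/2^(Jn η' η))^4)⁻¹
        * ((1 + ((n1 η' η - 1:ℕ):ℝ)/2^(Jn η' η))^4)⁻¹
        * ((1 + ((n2 η' η - 1:ℕ):ℝ)/2^(Jn η' η))^4)⁻¹) := ENNReal.ofReal_le_ofReal h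
    _ = G (E η' η) := by
        rw [hEq, ENNReal.ofReal_mul (by positivity), ENNReal.ofReal_mul (by positivity),
          ENNReal.ofReal_mul (by positivity)]
        ring

lemma tsum_prod_mul {α β : Type*} (f : α → ℝ≥0∞) (g : β → ℝ≥0∞) :
    ∑' p : α × β, f p.1 * g p.2 = (∑' a, f a) * ∑' b, g b := by
  rw [ENNReal.tsum_prod']
  simp_rw [ENNReal.tsum_mul_left, ENNReal.tsum_mul_right]

lemma tsum_fst_bool (F : ℕ → ℝ≥0∞) : ∑' p : ℕ × Bool, F p.1 = 2 * ∑' n, F n := by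
  rw [ENNReal.tsum_prod']
  have : ∀ n, ∑' _ : Bool, F n = 2 * F n := by
    intro n; rw [tsum_bool, two_mul]
  simp_rw [this]
  exact ENNReal.tsum_mul_left

def Z16 : ℝ≥0∞ := ∑' a : ℕ, ENNReal.ofReal (16 * ((1+(a:ℝ))^2)⁻¹)

lemma Z16_ne_top : Z16 ≠ ⊤ := by
  have h1 : Summable (fun n : ℕ => 1/((n:ℝ))^2) := Real.summable_one_div_nat_pow.2 one_lt_two
  have h2 := (summable_nat_add_iff 1).2 h1
  have hs : Summable (fun a : ℕ => 16 * ((1+(a:ℝ))^2)⁻¹) := by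
    apply Summable.congr (h2.mul_left 16)
    intro a
    push_cast
    rw [one_div]
    ring_nf
  rw [Z16, ← ENNReal.ofReal_tsum_of_nonneg (fun a => by positivity) hs]
  exact ENNReal.ofReal_ne_top

lemma Fe_le (J n : ℕ) :
    Fe J n ≤ ENNReal.ofReal (16 * ((1+((n / 2^J : ℕ)):ℝ)^2)⁻¹) := by
  apply ENNReal.ofReal_le_ofReal
  have h2J1 : (1:ℝ) ≤ 2^J := one_le_pow₀ one_le_two
  set c : ℝ := ((n-1:ℕ):ℝ)/2^J with hc
  have hc0 : 0 ≤ c := by positivity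
  set a : ℝ := ((n / 2^J : ℕ):ℝ) with ha
  have ha0 : 0 ≤ a := Nat.cast_nonneg _
  have key : 1 + a ≤ 2 * (1 + c) := by
    have k1 : a ≤ (n:ℝ)/2^J := by
      rw [ha]
      have := Nat.cast_div_le (α := ℝ) (m := n) (n := 2^J)
      push_cast at this ⊢
      exact this
    have k2 : n ≤ (n-1:ℕ) + 2^J := by
      have := Nat.one_le_two_pow (n := J)
      omega
    have k3 : (n:ℝ) ≤ ((n-1:ℕ):ℝ) + 2^J := by exact_mod_cast k2
    have k4 : (n:ℝ)/2^J ≤ c + 1 := by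
      have he : c + 1 = (((n-1:ℕ):ℝ) + 2^J)/2^J := by
        rw [hc, add_div, div_self (show (2:ℝ)^J ≠ 0 by positivity)]
      rw [he]
      gcongr
    linarith
  have hfinal : (1+a)^2 / 16 ≤ (1+c)^4 := by
    have p1 : (1+a)^2 ≤ (2*(1+c))^2 := pow_le_pow_left₀ (by linarith) key 2
    have p2 : (1+c)^2 ≤ (1+c)^4 := pow_le_pow_right₀ (by linarith) (by norm_num)
    nlinarith
  calc ((1+c)^4)⁻¹ ≤ ((1+a)^2/16)⁻¹ := inv_anti₀ (by positivity) hfinal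
    _ = 16 * ((1+a)^2)⁻¹ := by rw [inv_div, div_eq_mul_inv]

lemma SFe_le (J : ℕ) : (∑' n, Fe J n) ≤ (2:ℝ≥0∞)^J * Z16 := by
  have hMpos : 0 < 2^J := Nat.two_pow_pos J
  set g : ℕ × Fin (2^J) → ℝ≥0∞ :=
    fun p => ENNReal.ofReal (16 * ((1+(p.1:ℝ))^2)⁻¹) with hg
  have hφ : Function.Injective
      (fun n : ℕ => ((n / 2^J, ⟨n % 2^J, Nat.mod_lt n hMpos⟩) : ℕ × Fin (2^J))) := by
    intro x y h
    simp only [Prod.mk.injEq, Fin.mk.injEq] at h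
    obtain ⟨hh1, hh2⟩ := h
    rw [← Nat.div_add_mod x (2^J), ← Nat.div_add_mod y (2^J), hh1, hh2]
  calc ∑' n, Fe J n
      ≤ ∑' n : ℕ, g ((fun n : ℕ => ((n / 2^J, ⟨n % 2^J, Nat.mod_lt n hMpos⟩)
          : ℕ × Fin (2^J))) n) := ENNReal.tsum_le_tsum (fun n => Fe_le J n)
    _ ≤ ∑' p, g p := ENNReal.tsum_comp_le_tsum_of_injective hφ g
    _ = ∑' x : ℕ, ∑' _ : Fin (2^J), ENNReal.ofReal (16 * ((1+(x:ℝ))^2)⁻¹) :=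
        ENNReal.tsum_prod'
    _ = ∑' x : ℕ, ((2^J : ℕ) : ℝ≥0∞) * ENNReal.ofReal (16 * ((1+(x:ℝ))^2)⁻¹) := by
        congr 1; funext x
        rw [tsum_fintype]
        simp [Finset.sum_const, nsmul_eq_mul]
    _ = ((2^J : ℕ) : ℝ≥0∞) * Z16 := by rw [ENNReal.tsum_mul_left]; rfl
    _ = (2:ℝ≥0∞)^J * Z16 := by push_cast; ring

lemma c0e_eq (J : ℕ) : c0e J = (((2:ℝ≥0∞)^J)⁻¹)^6 := by
  rw [c0e, ENNReal.ofReal_pow (by positivity), ENNReal.ofReal_inv_of_pos (by positivity),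
    ENNReal.ofReal_pow (by norm_num), ENNReal.ofReal_ofNat]

lemma c0e_mul (J : ℕ) : c0e J * ((2:ℝ≥0∞)^J)^3 ≤ (2⁻¹:ℝ≥0∞)^J := by
  have hx0 : ((2:ℝ≥0∞)^J) ≠ 0 := pow_ne_zero J two_ne_zero
  have hxt : ((2:ℝ≥0∞)^J) ≠ ⊤ := ENNReal.pow_ne_top ENNReal.ofNat_ne_top
  rw [c0e_eq]
  have h6 : (((2:ℝ≥0∞)^J)⁻¹)^6 * ((2:ℝ≥0∞)^J)^3 = (((2:ℝ≥0∞)^J)⁻¹)^3 := by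
    rw [show (6:ℕ) = 3+3 from rfl, pow_add]
    rw [mul_assoc, ← mul_pow, ENNReal.inv_mul_cancel hx0 hxt, one_pow, mul_one]
  rw [h6, ENNReal.inv_pow, ← pow_mul]
  exact pow_le_pow_of_le_one zero_le (ENNReal.inv_le_one.2 one_le_two) (by omega)

lemma G_sum_le :
    (∑' pp : (ℕ×Bool)×(ℕ×Bool)×(ℕ×Bool)×(ℕ×Bool), G pp) ≤ 32 * Z16^3 := by
  have hsum : ∀ J : ℕ, (∑' r : (ℕ×Bool)×(ℕ×Bool)×(ℕ×Bool),
      (Fe J r.1.1 * (Fe J r.2.1.1 * Fe J r.2.2.1)))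
      = (2 * ∑' n, Fe J n) * ((2 * ∑' n, Fe J n) * (2 * ∑' n, Fe J n)) := by
    intro J
    have e1 := tsum_prod_mul (fun p : ℕ×Bool => Fe J p.1)
      (fun t : (ℕ×Bool)×(ℕ×Bool) => Fe J t.1.1 * Fe J t.2.1)
    have e2 := tsum_prod_mul (fun p : ℕ×Bool => Fe J p.1) (fun p : ℕ×Bool => Fe J p.1)
    have e3 := tsum_fst_bool (fun n => Fe J n)
    calc (∑' r : (ℕ×Bool)×(ℕ×Bool)×(ℕ×Bool),
          (Fe J r.1.1 * (Fe J r.2.1.1 * Fe J r.2.2.1)))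
        = (∑' p : ℕ×Bool, Fe J p.1)
            * (∑' t : (ℕ×Bool)×(ℕ×Bool), Fe J t.1.1 * Fe J t.2.1) := e1
      _ = (∑' p : ℕ×Bool, Fe J p.1)
            * ((∑' p : ℕ×Bool, Fe J p.1) * (∑' p : ℕ×Bool, Fe J p.1)) := by rw [e2]
      _ = (2 * ∑' n, Fe J n) * ((2 * ∑' n, Fe J n) * (2 * ∑' n, Fe J n)) := by rw [e3]
  calc (∑' pp : (ℕ×Bool)×(ℕ×Bool)×(ℕ×Bool)×(ℕ×Bool), G pp)
      = ∑' a : ℕ×Bool, ∑' r : (ℕ×Bool)×(ℕ×Bool)×(ℕ×Bool), G (a, r) := ENNReal.tsum_prod'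
    _ = ∑' a : ℕ×Bool, c0e a.1 * ((2 * ∑' n, Fe a.1 n)
          * ((2 * ∑' n, Fe a.1 n) * (2 * ∑' n, Fe a.1 n))) := by
        congr 1; funext a
        calc (∑' r : (ℕ×Bool)×(ℕ×Bool)×(ℕ×Bool), G (a, r))
            = ∑' r : (ℕ×Bool)×(ℕ×Bool)×(ℕ×Bool),
                c0e a.1 * (Fe a.1 r.1.1 * (Fe a.1 r.2.1.1 * Fe a.1 r.2.2.1)) := rfl
          _ = c0e a.1 * ∑' r : (ℕ×Bool)×(ℕ×Bool)×(ℕ×Bool),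
                (Fe a.1 r.1.1 * (Fe a.1 r.2.1.1 * Fe a.1 r.2.2.1)) := ENNReal.tsum_mul_left
          _ = _ := by rw [hsum a.1]
    _ ≤ ∑' a : ℕ×Bool, 8 * Z16^3 * (2⁻¹:ℝ≥0∞)^a.1 := by
        apply ENNReal.tsum_le_tsum
        intro a
        have hS := SFe_le a.1
        calc c0e a.1 * ((2 * ∑' n, Fe a.1 n)
              * ((2 * ∑' n, Fe a.1 n) * (2 * ∑' n, Fe a.1 n)))
            ≤ c0e a.1 * ((2 * ((2:ℝ≥0∞)^a.1 * Z16))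
              * ((2 * ((2:ℝ≥0∞)^a.1 * Z16)) * (2 * ((2:ℝ≥0∞)^a.1 * Z16)))) := by gcongr
          _ = (c0e a.1 * ((2:ℝ≥0∞)^a.1)^3) * (8 * Z16^3) := by ring
          _ ≤ (2⁻¹:ℝ≥0∞)^a.1 * (8 * Z16^3) := mul_le_mul_left (c0e_mul a.1) _
          _ = 8 * Z16^3 * (2⁻¹:ℝ≥0∞)^a.1 := by ring
    _ = 8 * Z16^3 * ∑' a : ℕ×Bool, (2⁻¹:ℝ≥0∞)^a.1 := ENNReal.tsum_mul_left
    _ = 8 * Z16^3 * (2 * ∑' J : ℕ, (2⁻¹:ℝ≥0∞)^J) := by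
        rw [tsum_fst_bool (fun J => (2⁻¹:ℝ≥0∞)^J)]
    _ = 8 * Z16^3 * (2 * 2) := by
        rw [ENNReal.tsum_geometric, ENNReal.one_sub_inv_two, inv_inv]
    _ = 32 * Z16^3 := by ring

end OmegaAux

/-- Lemma 6.2 (Candès–Demanet): summability of negative powers of the
dyadic-parabolic pseudo-distance, uniformly in the second index. -/
theorem omegaDist_summable :
    ∃ N₀ : ℝ, 0 < N₀ ∧ ∀ N : ℝ, N₀ ≤ N → ∃ c : ℝ, 0 < c ∧
      ∀ η' : CurveletIndex,
        (∑' η : CurveletIndex, ENNReal.ofReal (omegaDist η η' ^ (-N))) ≤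
          ENNReal.ofReal c := by

  refine ⟨12, by norm_num, fun N hN => ?_⟩
  have hB : (32 * OmegaAux.Z16^3 : ℝ≥0∞) ≠ ⊤ :=
    ENNReal.mul_ne_top (by norm_num) (ENNReal.pow_ne_top OmegaAux.Z16_ne_top)
  have ht0 : 0 ≤ (32 * OmegaAux.Z16^3 : ℝ≥0∞).toReal := ENNReal.toReal_nonneg
  refine ⟨(32 * OmegaAux.Z16^3 : ℝ≥0∞).toReal + 1, by linarith, fun η' => ?_⟩
  calc (∑' η : CurveletIndex, ENNReal.ofReal (omegaDist η η' ^ (-N)))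
      ≤ ∑' η : CurveletIndex, OmegaAux.G (OmegaAux.E η' η) :=
        ENNReal.tsum_le_tsum (fun η => OmegaAux.key_en η' η hN)
    _ ≤ ∑' pp, OmegaAux.G pp :=
        ENNReal.tsum_comp_le_tsum_of_injective (OmegaAux.E_inj η') OmegaAux.G
    _ ≤ 32 * OmegaAux.Z16^3 := OmegaAux.G_sum_le
    _ ≤ ENNReal.ofReal ((32 * OmegaAux.Z16^3 : ℝ≥0∞).toReal + 1) := by
        conv_lhs => rw [← ENNReal.ofReal_toReal hB]
        exact ENNReal.ofReal_le_ofReal (by linarith)
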